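/- Let G be a graph and v a vertex of G. The number of maximal cliques of G that do not arise from a maximal clique of G \ {v} (by taking it directly or adding v) is at most the sum over all vertices u ∉ N(v) ∪ {v} of 3^{|N(u) ∩ N(v)|/3}. Consequently, if G is c-closed on n vertices, the number of such cliques is at most 3^{(c-1)/3} · n. -/

import Mathlib

open SimpleGraph

/-- A graph is `c`-closed if every pair of distinct non-adjacent vertices has
fewer than `c` common neighbors. -/
def IsCClosed {V : Type*} (G : SimpleGraph V) (c : ℕ) : Prop :=
  ∀ u v : V, u ≠ v → ¬G.Adj u v → (G.commonNeighbors u v).ncard < c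

/-- `K` is a maximal clique of `G`. -/
def IsMaxClique {V : Type*} (G : SimpleGraph V) (K : Finset V) : Prop :=
  G.IsClique ↑K ∧ ∀ t : Finset V, G.IsClique ↑t → K ⊆ t → K = t

/-- `K` is a maximal clique of the subgraph of `G` induced on the vertex set `A`. -/
def IsMaxCliqueOn {V : Type*} (G : SimpleGraph V) (A : Set V) (K : Finset V) : Prop :=
  ↑K ⊆ A ∧ G.IsClique ↑K ∧ ∀ t : Finset V, ↑t ⊆ A → G.IsClique ↑t → K ⊆ t → K = t

lemma cube_le_pow (t : ℕ) : t ≥ 1 → t^3 ≤ 3^t := by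
  induction t with
  | zero => omega
  | succ n ih =>
    intro _
    rcases Nat.lt_or_ge n 3 with h | h
    · interval_cases n <;> norm_num
    · have h1 := ih (by omega)
      have : (n+1)^3 ≤ 3 * n^3 := by nlinarith [sq_nonneg n, h]
      calc (n+1)^3 ≤ 3 * n^3 := this
        _ ≤ 3 * 3^n := by omega
        _ = 3^(n+1) := by ring

lemma nat_le_rpow (t : ℕ) (ht : 1 ≤ t) : (t : ℝ) ≤ (3:ℝ) ^ ((t:ℝ)/3) := by
  have h3 : (0:ℝ) < (3:ℝ) ^ ((t:ℝ)/3) := Real.rpow_pos_of_pos (by norm_num) _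
  have hc : ((t:ℝ))^(3:ℕ) ≤ ((3:ℝ) ^ ((t:ℝ)/3))^(3:ℕ) := by
    have : ((3:ℝ) ^ ((t:ℝ)/3))^(3:ℕ) = (3:ℝ) ^ ((t:ℝ)) := by
      rw [← Real.rpow_natCast ((3:ℝ) ^ ((t:ℝ)/3)) 3, ← Real.rpow_mul (by norm_num)]
      norm_num
    rw [this, Real.rpow_natCast]
    have := cube_le_pow t ht
    calc ((t:ℝ))^(3:ℕ) = ((t^3 : ℕ) : ℝ) := by push_cast; ring
      _ ≤ ((3^t : ℕ) : ℝ) := by exact_mod_cast this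
      _ = (3:ℝ)^t := by push_cast; ring
  exact le_of_pow_le_pow_left₀ (by norm_num) h3.le hc

lemma mcf_card {V : Type*} [Fintype V] (P : Finset V → Prop) [DecidablePred P] :
    {K : Finset V | P K}.ncard = (Finset.univ.filter P).card := by
  simp [Set.ncard_eq_toFinset_card', Set.toFinset_setOf]

open scoped Classical in
lemma moon_moser {V : Type*} [Fintype V] [DecidableEq V] (G : SimpleGraph V) (A : Set V) :
    (({K : Finset V | IsMaxCliqueOn G A K}.ncard : ℝ)) ≤ (3:ℝ) ^ ((A.ncard : ℝ)/3) := by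
  generalize hn : A.ncard = n
  induction n using Nat.strong_induction_on generalizing A with
  | _ n ih =>
  rw [mcf_card]
  rcases Nat.eq_zero_or_pos n with h0 | hpos
  · subst h0
    have hA : A = ∅ := (Set.ncard_eq_zero A.toFinite).mp hn
    subst hA
    have : (Finset.univ.filter (fun K : Finset V => IsMaxCliqueOn G ∅ K)) = {∅} := by
      ext K
      simp only [Finset.mem_filter, Finset.mem_univ, true_and, Finset.mem_singleton]
      constructor
      · rintro ⟨hsub, -, -⟩
        exact Finset.coe_eq_empty.mp (Set.subset_empty_iff.mp hsub)
      · rintro rfl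
        refine ⟨by simp, by simp, fun t ht _ _ => ?_⟩
        exact (Finset.coe_eq_empty.mp (Set.subset_empty_iff.mp ht)).symm
    rw [this]
    norm_num
  · -- A nonempty
    have hAfin : A.Finite := A.toFinite
    have hAne : A.Nonempty := Set.nonempty_of_ncard_ne_zero (by omega)
    -- choose vertex of maximum degree within A
    obtain ⟨v, hvA', hvmax⟩ := hAfin.toFinset.exists_max_image
      (fun u => (G.neighborSet u ∩ A).ncard)
      ((Set.Finite.toFinset_nonempty hAfin).mpr hAne)
    have hvA : v ∈ A := by simpa using hvA'
    set d : ℕ := (G.neighborSet v ∩ A).ncard with hd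
    set S : Set V := A \ G.neighborSet v with hS
    have hSA : S ⊆ A := Set.diff_subset
    have hSfin : S.Finite := hAfin.subset hSA
    set SF : Finset V := hSfin.toFinset with hSF
    have hmemSF : ∀ u, u ∈ SF ↔ u ∈ S := fun u => Set.Finite.mem_toFinset _
    have hvS : v ∈ S := ⟨hvA, by simp [SimpleGraph.mem_neighborSet]⟩
    have hSeq : S = A \ (G.neighborSet v ∩ A) := by
      ext x; simp only [hS, Set.mem_diff, Set.mem_inter_iff]; tauto
    have hdle : (G.neighborSet v ∩ A) ⊆ A := Set.inter_subset_right
    have hdn : d ≤ n := hn ▸ Set.ncard_le_ncard hdle hAfin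
    have hScard : S.ncard = n - d := by
      rw [hSeq, Set.ncard_diff hdle (hAfin.subset hdle), hn]
    have hvnotin : v ∉ G.neighborSet v ∩ A := by
      simp [SimpleGraph.mem_neighborSet]
    have hdlt : d < n := by
      rw [← hn]
      exact Set.ncard_lt_ncard ⟨hdle, fun h => hvnotin (h hvA)⟩ hAfin
    -- covering by cliques containing some u ∈ S
    have hcover : (Finset.univ.filter (fun K : Finset V => IsMaxCliqueOn G A K)) ⊆
        SF.biUnion
          (fun u => Finset.univ.filter (fun K : Finset V => IsMaxCliqueOn G A K ∧ u ∈ K)) := by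
      intro K hK
      rw [Finset.mem_filter] at hK
      obtain ⟨-, hKA, hKc, hKm⟩ := hK
      by_cases hex : ∃ u ∈ S, u ∈ K
      · obtain ⟨u, huS, huK⟩ := hex
        refine Finset.mem_biUnion.mpr ⟨u, (hmemSF u).mpr huS, ?_⟩
        exact Finset.mem_filter.mpr ⟨Finset.mem_univ _, ⟨hKA, hKc, hKm⟩, huK⟩
      · exfalso
        push_neg at hex
        have hKN : (↑K : Set V) ⊆ G.neighborSet v := by
          intro w hw
          have hwA : w ∈ A := hKA hw
          by_contra hwN
          exact hex w ⟨hwA, hwN⟩ hw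
        have hvK : v ∉ K := fun h =>
          (by simp [SimpleGraph.mem_neighborSet] : v ∉ G.neighborSet v) (hKN h)
        have hclique : G.IsClique ↑(insert v K) := by
          rw [Finset.coe_insert]
          exact hKc.insert (fun b hb hbv => hKN hb)
        have heq := hKm (insert v K)
          (by rw [Finset.coe_insert]; exact Set.insert_subset hvA hKA)
          hclique (Finset.subset_insert _ _)
        exact hvK (heq ▸ Finset.mem_insert_self v K)
    have hcard := Finset.card_le_card hcover
    have hbiu := Finset.card_biUnion_le (s := SF)
      (t := fun u => Finset.univ.filter (fun K : Finset V => IsMaxCliqueOn G A K ∧ u ∈ K))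
    -- per-vertex bound
    have hper : ∀ u ∈ SF,
        ((Finset.univ.filter (fun K : Finset V => IsMaxCliqueOn G A K ∧ u ∈ K)).card : ℝ)
          ≤ (3:ℝ) ^ ((d:ℝ)/3) := by
      intro u hu
      have huS : u ∈ S := (hmemSF u).mp hu
      have huA : u ∈ A := hSA huS
      set B : Set V := G.neighborSet u ∩ A with hB
      have hunotB : u ∉ B := by simp [hB, SimpleGraph.mem_neighborSet]
      have hBA : B ⊆ A := Set.inter_subset_right
      have hBlt : B.ncard < n := by
        rw [← hn]
        exact Set.ncard_lt_ncard ⟨hBA, fun h => hunotB (h huA)⟩ hAfin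
      have hinj : ((Finset.univ.filter (fun K : Finset V => IsMaxCliqueOn G A K ∧ u ∈ K)).card)
          ≤ (Finset.univ.filter (fun K : Finset V => IsMaxCliqueOn G B K)).card := by
        apply Finset.card_le_card_of_injOn (fun K => K.erase u)
        · intro K hK
          rw [Finset.mem_coe, Finset.mem_filter] at hK
          obtain ⟨-, ⟨hKA, hKc, hKm⟩, huK⟩ := hK
          rw [Finset.mem_coe, Finset.mem_filter]
          refine ⟨Finset.mem_univ _, ?_, ?_, ?_⟩
          · intro w hw
            rw [Finset.coe_erase] at hw
            obtain ⟨hwK, hwu⟩ := hw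
            have hwu' : w ≠ u := by simpa using hwu
            exact ⟨hKc (Finset.mem_coe.mpr huK) hwK (Ne.symm hwu'), hKA hwK⟩
          · apply hKc.subset
            rw [Finset.coe_erase]
            exact Set.diff_subset
          · intro t htB htc hsub
            have hut : u ∉ t := fun h => hunotB (htB (Finset.mem_coe.mpr h))
            have htc' : G.IsClique ↑(insert u t) := by
              rw [Finset.coe_insert]
              exact htc.insert (fun b hb hbu => (htB hb).1)
            have hKsub : K ⊆ insert u t := by
              intro w hw
              rcases eq_or_ne w u with rfl | hne
              · exact Finset.mem_insert_self _ _
              · exact Finset.mem_insert_of_mem (hsub (Finset.mem_erase.mpr ⟨hne, hw⟩))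
            have hins : ↑(insert u t) ⊆ A := by
              rw [Finset.coe_insert]
              exact Set.insert_subset huA (fun x hx => hBA (htB hx))
            have heq := hKm (insert u t) hins htc' hKsub
            rw [heq]; exact Finset.erase_insert hut
        · intro K1 h1 K2 h2 heq
          simp only [Finset.coe_filter, Set.mem_setOf_eq] at h1 h2
          have e1 : insert u (K1.erase u) = K1 := Finset.insert_erase h1.2.2
          have e2 : insert u (K2.erase u) = K2 := Finset.insert_erase h2.2.2
          rw [← e1, ← e2]; exact congrArg (insert u) heq
      have hih : ((Finset.univ.filter (fun K : Finset V => IsMaxCliqueOn G B K)).card : ℝ)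
          ≤ (3:ℝ) ^ ((B.ncard:ℝ)/3) := by
        have := ih B.ncard hBlt B rfl
        rwa [mcf_card] at this
      have hBd : B.ncard ≤ d := hvmax u (by simpa using huA)
      calc ((Finset.univ.filter (fun K : Finset V => IsMaxCliqueOn G A K ∧ u ∈ K)).card : ℝ)
          ≤ ((Finset.univ.filter (fun K : Finset V => IsMaxCliqueOn G B K)).card : ℝ) := by
            exact_mod_cast hinj
        _ ≤ (3:ℝ) ^ ((B.ncard:ℝ)/3) := hih
        _ ≤ (3:ℝ) ^ ((d:ℝ)/3) := by
            apply Real.rpow_le_rpow_of_exponent_le (by norm_num)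
            have : (B.ncard:ℝ) ≤ (d:ℝ) := by exact_mod_cast hBd
            linarith
    -- assemble
    have hSFcard : SF.card = n - d := by
      rw [← hScard, hSF, ← Set.ncard_eq_toFinset_card S hSfin]
    have hsum : ((Finset.univ.filter (fun K : Finset V => IsMaxCliqueOn G A K)).card : ℝ)
        ≤ ((n - d : ℕ) : ℝ) * (3:ℝ) ^ ((d:ℝ)/3) := by
      calc ((Finset.univ.filter (fun K : Finset V => IsMaxCliqueOn G A K)).card : ℝ)
          ≤ ((SF.biUnion
              (fun u => Finset.univ.filter (fun K : Finset V => IsMaxCliqueOn G A K ∧ u ∈ K))).card : ℝ) := by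
            exact_mod_cast hcard
        _ ≤ ((∑ u ∈ SF,
              (Finset.univ.filter (fun K : Finset V => IsMaxCliqueOn G A K ∧ u ∈ K)).card : ℕ) : ℝ) := by
            exact_mod_cast hbiu
        _ = ∑ u ∈ SF,
              ((Finset.univ.filter (fun K : Finset V => IsMaxCliqueOn G A K ∧ u ∈ K)).card : ℝ) := by
            push_cast; ring
        _ ≤ ∑ u ∈ SF, (3:ℝ) ^ ((d:ℝ)/3) := Finset.sum_le_sum hper
        _ = ((n - d : ℕ) : ℝ) * (3:ℝ) ^ ((d:ℝ)/3) := by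
            rw [Finset.sum_const, hSFcard, nsmul_eq_mul]
    have ht1 : 1 ≤ n - d := by omega
    have hfin : ((n - d : ℕ) : ℝ) * (3:ℝ) ^ ((d:ℝ)/3) ≤ (3:ℝ) ^ ((n:ℝ)/3) := by
      have h1 : ((n - d : ℕ) : ℝ) ≤ (3:ℝ) ^ (((n-d:ℕ):ℝ)/3) := nat_le_rpow _ ht1
      have h2 : ((n - d : ℕ) : ℝ) * (3:ℝ) ^ ((d:ℝ)/3)
          ≤ (3:ℝ) ^ (((n-d:ℕ):ℝ)/3) * (3:ℝ) ^ ((d:ℝ)/3) :=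
        mul_le_mul_of_nonneg_right h1 (Real.rpow_pos_of_pos (by norm_num) _).le
      refine h2.trans (le_of_eq ?_)
      rw [← Real.rpow_add (by norm_num)]
      congr 1
      have hcast : ((n-d:ℕ):ℝ) = (n:ℝ) - (d:ℝ) := by
        rw [Nat.cast_sub hdn]
      rw [hcast]; ring
    exact hsum.trans hfin

-- key structural lemma about a bad clique
open scoped Classical in
lemma bad_witness {V : Type*} [Fintype V] [DecidableEq V] (G : SimpleGraph V) (v : V)
    (K : Finset V) (hK : IsMaxClique G K)
    (hbad : ¬((v ∉ K ∧ IsMaxCliqueOn G {u | u ≠ v} K) ∨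
          (v ∈ K ∧ IsMaxCliqueOn G {u | u ≠ v} (K.erase v)))) :
    v ∈ K ∧ ∃ u : V, u ≠ v ∧ ¬G.Adj u v ∧
      IsMaxCliqueOn G (G.commonNeighbors u v) (K.erase v) := by
  obtain ⟨hKc, hKm⟩ := hK
  push_neg at hbad
  obtain ⟨hbad1, hbad2⟩ := hbad
  have hvK : v ∈ K := by
    by_contra hvK
    refine hbad1 hvK ⟨?_, hKc, fun t _ htc hsub => hKm t htc hsub⟩
    intro w hw
    exact fun hwv => hvK (Finset.mem_coe.mp (hwv ▸ hw))
  refine ⟨hvK, ?_⟩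
  have hbad2' := hbad2 hvK
  have hesub : ↑(K.erase v) ⊆ {u : V | u ≠ v} := by
    intro w hw
    rw [Finset.coe_erase] at hw
    simpa using hw.2
  have hec : G.IsClique ↑(K.erase v) := by
    apply hKc.subset
    rw [Finset.coe_erase]; exact Set.diff_subset
  rw [IsMaxCliqueOn] at hbad2'
  push_neg at hbad2'
  obtain ⟨t, htv, htc, hsub, hne⟩ := hbad2' hesub hec
  -- get u ∈ t \ K.erase v
  obtain ⟨u, hut, huK'⟩ : ∃ u ∈ t, u ∉ K.erase v := by
    by_contra h
    push_neg at h
    exact hne (Finset.Subset.antisymm hsub h)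
  have huv : u ≠ v := htv (Finset.mem_coe.mpr hut)
  have huK : u ∉ K := fun h => huK' (Finset.mem_erase.mpr ⟨huv, h⟩)
  have hadj : ∀ w ∈ K.erase v, G.Adj u w := by
    intro w hw
    have hwt : w ∈ t := hsub hw
    have hwu : w ≠ u := fun h => huK' (h ▸ hw)
    exact htc (Finset.mem_coe.mpr hut) (Finset.mem_coe.mpr hwt) (Ne.symm hwu)
  have hnadj : ¬G.Adj u v := by
    intro hadjuv
    have hclique : G.IsClique ↑(insert u K) := by
      rw [Finset.coe_insert]
      refine hKc.insert (fun b hb hbu => ?_)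
      rcases eq_or_ne b v with rfl | hbv
      · exact hadjuv
      · exact hadj b (Finset.mem_erase.mpr ⟨hbv, hb⟩)
    have := hKm (insert u K) hclique (Finset.subset_insert _ _)
    exact huK (this ▸ Finset.mem_insert_self u K)
  refine ⟨u, huv, hnadj, ?_, hec, ?_⟩
  · intro w hw
    rw [Finset.coe_erase] at hw
    obtain ⟨hwK, hwv⟩ := hw
    have hwv' : w ≠ v := by simpa using hwv
    rw [mem_commonNeighbors]
    exact ⟨hadj w (Finset.mem_erase.mpr ⟨hwv', Finset.mem_coe.mp hwK⟩),
      hKc (Finset.mem_coe.mpr hvK) hwK (Ne.symm hwv')⟩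
  · intro t' ht'sub ht'c hsub'
    have hvt' : v ∉ t' := by
      intro h
      have := ht'sub (Finset.mem_coe.mpr h)
      rw [mem_commonNeighbors] at this
      exact G.irrefl this.2
    have hclique : G.IsClique ↑(insert v t') := by
      rw [Finset.coe_insert]
      refine ht'c.insert (fun b hb hbv => ?_)
      have := ht'sub hb
      rw [mem_commonNeighbors] at this
      exact this.2
    have hKsub : K ⊆ insert v t' := by
      intro w hw
      rcases eq_or_ne w v with rfl | hne
      · exact Finset.mem_insert_self _ _
      · exact Finset.mem_insert_of_mem (hsub' (Finset.mem_erase.mpr ⟨hne, hw⟩))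
    have heq := hKm (insert v t') hclique hKsub
    rw [heq, Finset.erase_insert hvt']

open scoped Classical in
theorem stmt14 {V : Type*} [Fintype V] [DecidableEq V] (G : SimpleGraph V) (v : V) :
    (({K : Finset V | IsMaxClique G K ∧
        ¬((v ∉ K ∧ IsMaxCliqueOn G {u | u ≠ v} K) ∨
          (v ∈ K ∧ IsMaxCliqueOn G {u | u ≠ v} (K.erase v)))}.ncard : ℝ) ≤
      ∑ u ∈ Finset.univ.filter (fun u : V => u ≠ v ∧ ¬G.Adj u v),
        (3 : ℝ) ^ (((G.commonNeighbors u v).ncard : ℝ) / 3)) ∧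
    (∀ c : ℕ, 0 < c → IsCClosed G c →
      ({K : Finset V | IsMaxClique G K ∧
        ¬((v ∉ K ∧ IsMaxCliqueOn G {u | u ≠ v} K) ∨
          (v ∈ K ∧ IsMaxCliqueOn G {u | u ≠ v} (K.erase v)))}.ncard : ℝ) ≤
      (3 : ℝ) ^ (((c : ℝ) - 1) / 3) * (Fintype.card V : ℝ)) := by
  set P : Finset V → Prop := fun K => IsMaxClique G K ∧
        ¬((v ∉ K ∧ IsMaxCliqueOn G {u | u ≠ v} K) ∨
          (v ∈ K ∧ IsMaxCliqueOn G {u | u ≠ v} (K.erase v))) with hP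
  set U : Finset V := Finset.univ.filter (fun u : V => u ≠ v ∧ ¬G.Adj u v) with hU
  have key : (({K : Finset V | P K}.ncard : ℝ)) ≤
      ∑ u ∈ U, (3 : ℝ) ^ (((G.commonNeighbors u v).ncard : ℝ) / 3) := by
    rw [mcf_card]
    have hcover : Finset.univ.filter P ⊆ U.biUnion (fun u =>
        Finset.univ.filter (fun K : Finset V => v ∈ K ∧
          IsMaxCliqueOn G (G.commonNeighbors u v) (K.erase v))) := by
      intro K hK
      rw [Finset.mem_filter] at hK
      obtain ⟨-, hmax, hbad⟩ := hK
      obtain ⟨hvK, u, huv, hnadj, hmco⟩ := bad_witness G v K hmax hbad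
      refine Finset.mem_biUnion.mpr ⟨u, ?_, ?_⟩
      · rw [hU, Finset.mem_filter]; exact ⟨Finset.mem_univ _, huv, hnadj⟩
      · exact Finset.mem_filter.mpr ⟨Finset.mem_univ _, hvK, hmco⟩
    have hper : ∀ u ∈ U,
        ((Finset.univ.filter (fun K : Finset V => v ∈ K ∧
          IsMaxCliqueOn G (G.commonNeighbors u v) (K.erase v))).card : ℝ)
          ≤ (3 : ℝ) ^ (((G.commonNeighbors u v).ncard : ℝ) / 3) := by
      intro u _
      have hinj : (Finset.univ.filter (fun K : Finset V => v ∈ K ∧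
          IsMaxCliqueOn G (G.commonNeighbors u v) (K.erase v))).card
          ≤ (Finset.univ.filter (fun K : Finset V =>
              IsMaxCliqueOn G (G.commonNeighbors u v) K)).card := by
        apply Finset.card_le_card_of_injOn (fun K => K.erase v)
        · intro K hK
          rw [Finset.mem_coe, Finset.mem_filter] at hK
          exact Finset.mem_filter.mpr ⟨Finset.mem_univ _, hK.2.2⟩
        · intro K1 h1 K2 h2 heq
          simp only [Finset.coe_filter, Set.mem_setOf_eq] at h1 h2
          have e1 : insert v (K1.erase v) = K1 := Finset.insert_erase h1.2.1
          have e2 : insert v (K2.erase v) = K2 := Finset.insert_erase h2.2.1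
          rw [← e1, ← e2]; exact congrArg (insert v) heq
      have hmm := moon_moser G (G.commonNeighbors u v)
      rw [mcf_card] at hmm
      calc ((Finset.univ.filter (fun K : Finset V => v ∈ K ∧
          IsMaxCliqueOn G (G.commonNeighbors u v) (K.erase v))).card : ℝ)
          ≤ ((Finset.univ.filter (fun K : Finset V =>
              IsMaxCliqueOn G (G.commonNeighbors u v) K)).card : ℝ) := by exact_mod_cast hinj
        _ ≤ (3 : ℝ) ^ (((G.commonNeighbors u v).ncard : ℝ) / 3) := hmm
    refine le_trans ?_ (Finset.sum_le_sum hper)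
    exact_mod_cast (Finset.card_le_card hcover).trans Finset.card_biUnion_le
  refine ⟨key, fun c hc hclosed => ?_⟩
  refine key.trans ?_
  have hterm : ∀ u ∈ U, (3 : ℝ) ^ (((G.commonNeighbors u v).ncard : ℝ) / 3)
      ≤ (3 : ℝ) ^ (((c : ℝ) - 1) / 3) := by
    intro u hu
    rw [hU, Finset.mem_filter] at hu
    obtain ⟨-, huv, hnadj⟩ := hu
    have hlt := hclosed u v huv hnadj
    apply Real.rpow_le_rpow_of_exponent_le (by norm_num)
    have h1 : ((G.commonNeighbors u v).ncard : ℝ) + 1 ≤ (c : ℝ) := by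
      exact_mod_cast hlt
    linarith
  calc ∑ u ∈ U, (3 : ℝ) ^ (((G.commonNeighbors u v).ncard : ℝ) / 3)
      ≤ ∑ _u ∈ U, (3 : ℝ) ^ (((c : ℝ) - 1) / 3) := Finset.sum_le_sum hterm
    _ = (U.card : ℝ) * (3 : ℝ) ^ (((c : ℝ) - 1) / 3) := by
        rw [Finset.sum_const, nsmul_eq_mul]
    _ ≤ (Fintype.card V : ℝ) * (3 : ℝ) ^ (((c : ℝ) - 1) / 3) := by
        apply mul_le_mul_of_nonneg_right _ (Real.rpow_pos_of_pos (by norm_num) _).le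
        exact_mod_cast Finset.card_le_card (Finset.subset_univ U) |>.trans_eq
          (Finset.card_univ)
    _ = (3 : ℝ) ^ (((c : ℝ) - 1) / 3) * (Fintype.card V : ℝ) := by ring
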